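/- arXiv:2308.13470 — 4 statements merged into one kernel-verified Lean document; each statement's English description precedes it below -/
import Mathlib

section
/- If the control set is unbounded above (ℓ̄ = +∞, i.e. controls take values in [ℓ̲, ∞)) and φ(1−σ) < ρ, then the simplified value function is identically zero: W(h₀) = 0 for every h₀ ≥ 0. -/
open MeasureTheory Real Set Filter

/-- State trajectory `h^{h₀,ℓ}(t) = e^{−φt} h₀ + φ ∫₀ᵗ e^{−φ(t−s)} ℓ(s) ds`. -/
noncomputable def traj (φ h₀ : ℝ) (ℓ : ℝ → ℝ) (t : ℝ) : ℝ :=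
  Real.exp (-(φ * t)) * h₀ + φ * ∫ s in (0:ℝ)..t, Real.exp (-(φ * (t - s))) * ℓ s

/-- Payoff `J(h₀,ℓ) = ∫₀^∞ e^{−ρt} ℓ(t)^{1−σ} (h^{h₀,ℓ}(t))^{γ(σ−1)} / (1−σ) dt`. -/
noncomputable def payoff (ρ φ σ γ h₀ : ℝ) (ℓ : ℝ → ℝ) : ℝ :=
  ∫ t in Set.Ioi (0:ℝ),
    Real.exp (-(ρ * t)) * (ℓ t ^ (1 - σ)) * (traj φ h₀ ℓ t ^ (γ * (σ - 1))) / (1 - σ)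

/-- Admissible controls: measurable, with values in `[ℓ̲, ℓ̄]` (where `ℓ̄` may be `+∞`). -/
def Admissible (lo : ℝ) (hi : EReal) (ℓ : ℝ → ℝ) : Prop :=
  Measurable ℓ ∧ ∀ t, 0 ≤ t → lo ≤ ℓ t ∧ (ℓ t : EReal) ≤ hi

/-- Simplified value function `W`. -/
noncomputable def W (ρ φ σ γ lo : ℝ) (hi : EReal) (h₀ : ℝ) : ℝ :=
  sSup {x | ∃ ℓ : ℝ → ℝ, Admissible lo hi ℓ ∧ x = payoff ρ φ σ γ h₀ ℓ}

/-- Trajectories are nonnegative when the data are. -/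
lemma traj_nonneg {φ h₀ : ℝ} {ℓ : ℝ → ℝ} (hφ : 0 ≤ φ) (hh₀ : 0 ≤ h₀)
    (hℓ : ∀ s, 0 ≤ s → 0 ≤ ℓ s) {t : ℝ} (ht : 0 ≤ t) : 0 ≤ traj φ h₀ ℓ t := by
  unfold traj
  have h1 : 0 ≤ ∫ s in (0:ℝ)..t, Real.exp (-(φ * (t - s))) * ℓ s := by
    apply intervalIntegral.integral_nonneg ht
    intro u hu
    exact mul_nonneg (Real.exp_pos _).le (hℓ u hu.1)
  positivity

/-- Any admissible payoff is nonpositive. -/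
lemma payoff_nonpos {ρ φ σ γ lo h₀ : ℝ} {hi : EReal} {ℓ : ℝ → ℝ}
    (hσ : 1 < σ) (hφ : 0 ≤ φ) (hlo : 0 < lo) (hh₀ : 0 ≤ h₀)
    (hA : Admissible lo hi ℓ) : payoff ρ φ σ γ h₀ ℓ ≤ 0 := by
  unfold payoff
  apply setIntegral_nonpos measurableSet_Ioi
  intro t ht
  have ht' : (0:ℝ) ≤ t := (le_of_lt ht)
  have hℓt : 0 < ℓ t := lt_of_lt_of_le hlo (hA.2 t ht').1
  have h1 : 0 < Real.exp (-(ρ * t)) * ℓ t ^ (1 - σ) :=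
    mul_pos (Real.exp_pos _) (Real.rpow_pos_of_pos hℓt _)
  have h2 : 0 ≤ traj φ h₀ ℓ t ^ (γ * (σ - 1)) :=
    Real.rpow_nonneg (traj_nonneg hφ hh₀ (fun s hs => le_trans hlo.le (hA.2 s hs).1) ht') _
  have h3 : 1 - σ < 0 := by linarith
  exact div_nonpos_of_nonneg_of_nonpos (mul_nonneg h1.le h2) h3.le

/-- Explicit formula for the trajectory of a constant control. -/
lemma traj_const (φ h₀ c : ℝ) (hφ : 0 < φ) (t : ℝ) :
    traj φ h₀ (fun _ => c) t
      = Real.exp (-(φ * t)) * h₀ + c * (1 - Real.exp (-(φ * t))) := by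
  unfold traj
  have key : ∫ s in (0:ℝ)..t, Real.exp (-(φ * (t - s))) * c
      = Real.exp (-(φ * t)) * c * (φ⁻¹ * (Real.exp (φ * t) - 1)) := by
    have h1 : ∀ s : ℝ, Real.exp (-(φ * (t - s))) * c
        = Real.exp (-(φ * t)) * c * Real.exp (φ * s) := by
      intro s
      rw [show -(φ * (t - s)) = -(φ * t) + φ * s by ring, Real.exp_add]
      ring
    simp_rw [h1]
    rw [intervalIntegral.integral_const_mul]
    congr 1
    rw [intervalIntegral.integral_comp_mul_left (fun x => Real.exp x) (ne_of_gt hφ)]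
    simp [integral_exp, smul_eq_mul]
  have h : Real.exp (-(φ * t)) * Real.exp (φ * t) = 1 := by
    rw [← Real.exp_add]; simp
  rw [key]
  field_simp
  linear_combination c * h

/-- Lower bound for the payoff of the constant control `c`. -/
lemma payoff_const_ge {ρ φ σ γ h₀ c : ℝ}
    (hρ : 0 < ρ) (hφ : 0 < φ) (hσ : 1 < σ) (hγe : 0 ≤ γ * (σ - 1))
    (hc : 0 < c) (hh₀ : 0 ≤ h₀) :
    -(c ^ (1 - σ) * (h₀ + c) ^ (γ * (σ - 1)) / (σ - 1) / ρ)
      ≤ payoff ρ φ σ γ h₀ (fun _ => c) := by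
  set M : ℝ := c ^ (1 - σ) * (h₀ + c) ^ (γ * (σ - 1)) / (σ - 1) with hM
  have hσ1 : (0:ℝ) < σ - 1 := by linarith
  have htraj_le : ∀ t : ℝ, 0 ≤ t → traj φ h₀ (fun _ => c) t ≤ h₀ + c := by
    intro t ht
    rw [traj_const φ h₀ c hφ t]
    have he1 : Real.exp (-(φ * t)) ≤ 1 := by
      rw [Real.exp_le_one_iff]
      nlinarith
    have he0 : 0 < Real.exp (-(φ * t)) := Real.exp_pos _
    nlinarith
  have htraj_nn : ∀ t : ℝ, 0 ≤ t → 0 ≤ traj φ h₀ (fun _ => c) t := fun t ht =>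
    traj_nonneg hφ.le hh₀ (fun s _ => hc.le) ht
  -- reduce to a bound on the negated integral
  rw [payoff, neg_le, ← integral_neg]
  have hbound : ∀ t ∈ Ioi (0:ℝ),
      -(Real.exp (-(ρ * t)) * c ^ (1 - σ)
          * traj φ h₀ (fun _ => c) t ^ (γ * (σ - 1)) / (1 - σ))
        ≤ Real.exp (-(ρ * t)) * (c ^ (1 - σ) * (h₀ + c) ^ (γ * (σ - 1)) / (σ - 1)) := by
    intro t ht
    have ht' : (0:ℝ) ≤ t := (le_of_lt ht)
    have h1 : traj φ h₀ (fun _ => c) t ^ (γ * (σ - 1)) ≤ (h₀ + c) ^ (γ * (σ - 1)) :=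
      Real.rpow_le_rpow (htraj_nn t ht') (htraj_le t ht') hγe
    have h2 : 0 < c ^ (1 - σ) := Real.rpow_pos_of_pos hc _
    have h3 : 0 < Real.exp (-(ρ * t)) := Real.exp_pos _
    rw [← div_neg, show -(1 - σ) = σ - 1 by ring,
      show Real.exp (-(ρ * t)) * (c ^ (1 - σ) * (h₀ + c) ^ (γ * (σ - 1)) / (σ - 1))
          = Real.exp (-(ρ * t)) * c ^ (1 - σ) * (h₀ + c) ^ (γ * (σ - 1)) / (σ - 1) by ring]
    exact (div_le_div_iff_of_pos_right hσ1).mpr (mul_le_mul_of_nonneg_left h1 (mul_nonneg h3.le h2.le))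
  have hnn : ∀ t ∈ Ioi (0:ℝ),
      0 ≤ -(Real.exp (-(ρ * t)) * c ^ (1 - σ)
          * traj φ h₀ (fun _ => c) t ^ (γ * (σ - 1)) / (1 - σ)) := by
    intro t ht
    have ht' : (0:ℝ) ≤ t := le_of_lt ht
    have h2 : 0 ≤ c ^ (1 - σ) := (Real.rpow_pos_of_pos hc _).le
    have h4 : 0 ≤ traj φ h₀ (fun _ => c) t ^ (γ * (σ - 1)) :=
      Real.rpow_nonneg (htraj_nn t ht') _
    have h5 : (1:ℝ) - σ < 0 := by linarith
    have := div_nonpos_of_nonneg_of_nonpos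
      (mul_nonneg (mul_nonneg (Real.exp_pos (-(ρ * t))).le h2) h4) h5.le
    linarith
  have hgi : IntegrableOn (fun t : ℝ =>
      Real.exp (-(ρ * t)) * (c ^ (1 - σ) * (h₀ + c) ^ (γ * (σ - 1)) / (σ - 1)))
      (Ioi (0:ℝ)) := by
    have := (exp_neg_integrableOn_Ioi 0 hρ).mul_const
      (c ^ (1 - σ) * (h₀ + c) ^ (γ * (σ - 1)) / (σ - 1))
    simpa [neg_mul, IntegrableOn] using this
  have hmono := integral_mono_of_nonneg
    (ae_restrict_of_forall_mem measurableSet_Ioi hnn) hgi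
    (ae_restrict_of_forall_mem measurableSet_Ioi hbound)
  refine hmono.trans ?_
  have hIexp : ∫ t in Ioi (0:ℝ), Real.exp (-(ρ * t)) = 1 / ρ := by
    have h := Real.integral_rpow_mul_exp_neg_mul_Ioi (one_pos) hρ
    simpa [Real.Gamma_one, Real.rpow_one] using h
  rw [MeasureTheory.integral_mul_const, hIexp]
  exact le_of_eq (by rw [hM]; ring)

lemma tendsto_bound {σ γ h₀ ρ : ℝ} (hσ : 1 < σ) (hγ1 : γ < 1) (hγe : 0 ≤ γ * (σ - 1))
    (hh₀ : 0 ≤ h₀) (hρ : 0 < ρ) :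
    Tendsto (fun c : ℝ => c ^ (1 - σ) * (h₀ + c) ^ (γ * (σ - 1)) / (σ - 1) / ρ)
      atTop (nhds 0) := by
  have hσ1 : (0:ℝ) < σ - 1 := by linarith
  set β := (σ - 1) * (1 - γ) with hβ
  have hβpos : 0 < β := by nlinarith
  have hg : Tendsto (fun c : ℝ => (1 + h₀) ^ (γ * (σ - 1)) / (σ - 1) / ρ * c ^ (-β))
      atTop (nhds 0) := by
    have := (tendsto_rpow_neg_atTop hβpos).const_mul
      ((1 + h₀) ^ (γ * (σ - 1)) / (σ - 1) / ρ)
    simpa using this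
  apply squeeze_zero' ?_ ?_ hg
  · filter_upwards [eventually_ge_atTop (1:ℝ)] with c hc
    have hc0 : (0:ℝ) < c := lt_of_lt_of_le one_pos hc
    positivity
  · filter_upwards [eventually_ge_atTop (1:ℝ)] with c hc
    have hc0 : (0:ℝ) < c := lt_of_lt_of_le one_pos hc
    have h1 : h₀ + c ≤ (1 + h₀) * c := by nlinarith
    have h2 : (h₀ + c) ^ (γ * (σ - 1)) ≤ ((1 + h₀) * c) ^ (γ * (σ - 1)) :=
      Real.rpow_le_rpow (by positivity) h1 hγe
    have h3 : ((1 + h₀) * c) ^ (γ * (σ - 1))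
        = (1 + h₀) ^ (γ * (σ - 1)) * c ^ (γ * (σ - 1)) :=
      Real.mul_rpow (by positivity) hc0.le
    have h4 : c ^ (1 - σ) * c ^ (γ * (σ - 1)) = c ^ (-β) := by
      rw [← Real.rpow_add hc0]; congr 1; rw [hβ]; ring
    calc c ^ (1 - σ) * (h₀ + c) ^ (γ * (σ - 1)) / (σ - 1) / ρ
        ≤ c ^ (1 - σ) * ((1 + h₀) ^ (γ * (σ - 1)) * c ^ (γ * (σ - 1))) / (σ - 1) / ρ := by
          rw [← h3]
          have hx : 0 ≤ c ^ (1 - σ) := (Real.rpow_pos_of_pos hc0 _).le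
          gcongr
      _ = (1 + h₀) ^ (γ * (σ - 1)) / (σ - 1) / ρ * c ^ (-β) := by rw [← h4]; ring

/-- with unbounded controls (`ℓ̄ = +∞`) and `φ(1−σ) < ρ`,
the simplified value function is identically zero. -/
theorem W_eq_zero_of_unbounded (ρ φ σ γ lo : ℝ)
    (hρ : 0 < ρ) (hφ : 0 < φ) (hσ : 1 < σ) (hγ0 : 0 < γ) (hγ1 : γ < 1)
    (hγσ : 1 < γ * (σ - 1)) (hlo : 0 < lo) (hcond : φ * (1 - σ) < ρ)
    (h₀ : ℝ) (hh₀ : 0 ≤ h₀) :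
    W ρ φ σ γ lo ⊤ h₀ = 0 := by
  unfold W
  set S := {x | ∃ ℓ : ℝ → ℝ, Admissible lo ⊤ ℓ ∧ x = payoff ρ φ σ γ h₀ ℓ} with hS
  have hγe : 0 ≤ γ * (σ - 1) := by nlinarith
  have hmem : ∀ c : ℝ, lo ≤ c → payoff ρ φ σ γ h₀ (fun _ => c) ∈ S := fun c hc =>
    ⟨fun _ => c, ⟨measurable_const, fun t _ => ⟨hc, le_top⟩⟩, rfl⟩
  have hub : ∀ x ∈ S, x ≤ 0 := by
    rintro x ⟨ℓ, hA, rfl⟩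
    exact payoff_nonpos hσ hφ.le hlo hh₀ hA
  have hbdd : BddAbove S := ⟨0, hub⟩
  have hne : S.Nonempty := ⟨_, hmem lo le_rfl⟩
  have hupper : sSup S ≤ 0 := csSup_le hne hub
  have hlower : 0 ≤ sSup S := by
    by_contra hneg
    push_neg at hneg
    have hev := (tendsto_bound hσ hγ1 hγe hh₀ hρ).eventually_lt_const
      (show (0:ℝ) < -sSup S by linarith)
    obtain ⟨c, hFc, hclo⟩ := (hev.and (eventually_ge_atTop lo)).exists
    have hc0 : 0 < c := lt_of_lt_of_le hlo hclo
    have hp := payoff_const_ge hρ hφ hσ hγe hc0 hh₀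
    have hle := le_csSup hbdd (hmem c hclo)
    linarith
  linarith
end

section
/- Along the sequence of constant controls ℓₙ(t) ≡ n, the payoff tends to zero: J(h₀, n) = ∫₀^∞ e^{−ρt} n^{1−σ} (e^{−φt} h₀ + n(1 − e^{−φt}))^{γ(σ−1)} / (1−σ) dt → 0 as n → ∞, for every fixed h₀ ≥ 0. -/
open MeasureTheory Real Set Filter

lemma integral_exp_neg_mul_Ioi_zero {b : ℝ} (hb : 0 < b) :
    (∫ t in Set.Ioi (0:ℝ), Real.exp (-(b * t))) = b⁻¹ := by
  have := integral_comp_mul_left_Ioi (fun x => Real.exp (-x)) 0 hb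
  simp only [mul_zero, integral_exp_neg_Ioi_zero, smul_eq_mul, mul_one] at this
  simpa using this

/-- along the constant controls `ℓₙ ≡ n`, the payoff
`J(h₀, n) = ∫₀^∞ e^{−ρt} n^{1−σ} (e^{−φt} h₀ + n(1 − e^{−φt}))^{γ(σ−1)} / (1−σ) dt`
tends to `0` as `n → ∞`. -/
theorem payoff_const_tendsto_zero (ρ φ σ γ h₀ : ℝ)
    (hρ : 0 < ρ) (hφ : 0 < φ) (hσ : 1 < σ) (hγ0 : 0 < γ) (hγ1 : γ < 1)
    (hγσ : 1 < γ * (σ - 1)) (hh₀ : 0 ≤ h₀) :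
    Tendsto (fun n : ℕ =>
        ∫ t in Set.Ioi (0:ℝ),
          Real.exp (-(ρ * t)) * ((n : ℝ) ^ (1 - σ)) *
            ((Real.exp (-(φ * t)) * h₀ + (n : ℝ) * (1 - Real.exp (-(φ * t)))) ^ (γ * (σ - 1)))
            / (1 - σ))
      atTop (nhds 0) := by
  have hσ' : 0 < σ - 1 := by linarith
  set p : ℝ := γ * (σ - 1) with hp_def
  have hp : 0 < p := by positivity
  have hexp : (1 - σ) + p < 0 := by nlinarith
  have hB : Tendsto (fun n : ℕ => (2:ℝ) ^ p * (n:ℝ) ^ ((1 - σ) + p) / (σ - 1) / ρ)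
      atTop (nhds 0) := by
    have h1 : Tendsto (fun x : ℝ => x ^ ((1 - σ) + p)) atTop (nhds 0) := by
      have := tendsto_rpow_neg_atTop (y := -((1 - σ) + p)) (by linarith)
      simpa using this
    have h2 : Tendsto (fun n : ℕ => (n:ℝ) ^ ((1 - σ) + p)) atTop (nhds 0) :=
      h1.comp tendsto_natCast_atTop_atTop
    have := ((h2.const_mul ((2:ℝ) ^ p)).div_const (σ - 1)).div_const ρ
    simpa using this
  refine squeeze_zero_norm' ?_ hB
  filter_upwards [tendsto_natCast_atTop_atTop.eventually_ge_atTop (1:ℝ),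
    tendsto_natCast_atTop_atTop.eventually_ge_atTop h₀] with n hn1 hnh
  have hn0 : (0:ℝ) < n := by linarith
  set A : ℝ := (n:ℝ) ^ (1 - σ) * (h₀ + n) ^ p / (σ - 1) with hA_def
  have hA0 : 0 ≤ A := by positivity
  have hg : IntegrableOn (fun t => A * Real.exp (-(ρ * t))) (Set.Ioi (0:ℝ)) := by
    have := (exp_neg_integrableOn_Ioi 0 hρ).const_mul A
    simpa [neg_mul, IntegrableOn] using this
  have key : ‖∫ t in Set.Ioi (0:ℝ),
      Real.exp (-(ρ * t)) * ((n : ℝ) ^ (1 - σ)) *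
        ((Real.exp (-(φ * t)) * h₀ + (n : ℝ) * (1 - Real.exp (-(φ * t)))) ^ p)
        / (1 - σ)‖ ≤ ∫ t in Set.Ioi (0:ℝ), A * Real.exp (-(ρ * t)) := by
    apply norm_integral_le_of_norm_le hg
    filter_upwards [ae_restrict_mem measurableSet_Ioi] with t ht
    have he1 : Real.exp (-(φ * t)) ≤ 1 := by
      apply Real.exp_le_one_iff.mpr; nlinarith [ht.out]
    have he0 : 0 < Real.exp (-(φ * t)) := Real.exp_pos _
    have hh : 0 ≤ Real.exp (-(φ * t)) * h₀ + (n : ℝ) * (1 - Real.exp (-(φ * t))) := by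
      have : 0 ≤ 1 - Real.exp (-(φ * t)) := by linarith
      positivity
    have hle : Real.exp (-(φ * t)) * h₀ + (n : ℝ) * (1 - Real.exp (-(φ * t))) ≤ h₀ + n := by
      nlinarith [Real.exp_pos (-(φ * t))]
    have hpow : (Real.exp (-(φ * t)) * h₀ + (n : ℝ) * (1 - Real.exp (-(φ * t)))) ^ p
        ≤ (h₀ + n) ^ p := Real.rpow_le_rpow hh hle hp.le
    have hnum : 0 ≤ Real.exp (-(ρ * t)) * ((n : ℝ) ^ (1 - σ)) *
        ((Real.exp (-(φ * t)) * h₀ + (n : ℝ) * (1 - Real.exp (-(φ * t)))) ^ p) := by positivity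
    have hnorm : ‖Real.exp (-(ρ * t)) * ((n : ℝ) ^ (1 - σ)) *
        ((Real.exp (-(φ * t)) * h₀ + (n : ℝ) * (1 - Real.exp (-(φ * t)))) ^ p) / (1 - σ)‖
        = Real.exp (-(ρ * t)) * ((n : ℝ) ^ (1 - σ)) *
        ((Real.exp (-(φ * t)) * h₀ + (n : ℝ) * (1 - Real.exp (-(φ * t)))) ^ p) / (σ - 1) := by
      rw [Real.norm_eq_abs, abs_div, abs_of_nonneg hnum,
        abs_of_neg (by linarith : (1:ℝ) - σ < 0), show -(1 - σ) = σ - 1 from by ring]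
    rw [hnorm, hA_def]
    rw [div_le_iff₀ hσ']
    have h1 : Real.exp (-(ρ * t)) * (n:ℝ) ^ (1 - σ) *
        (Real.exp (-(φ * t)) * h₀ + (n : ℝ) * (1 - Real.exp (-(φ * t)))) ^ p
        ≤ Real.exp (-(ρ * t)) * ((n:ℝ) ^ (1 - σ) * (h₀ + n) ^ p) := by
      calc Real.exp (-(ρ * t)) * (n:ℝ) ^ (1 - σ) *
            (Real.exp (-(φ * t)) * h₀ + (n : ℝ) * (1 - Real.exp (-(φ * t)))) ^ p
          ≤ Real.exp (-(ρ * t)) * (n:ℝ) ^ (1 - σ) * (h₀ + n) ^ p :=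
            mul_le_mul_of_nonneg_left hpow (by positivity)
        _ = Real.exp (-(ρ * t)) * ((n:ℝ) ^ (1 - σ) * (h₀ + n) ^ p) := by ring
    calc Real.exp (-(ρ * t)) * (n:ℝ) ^ (1 - σ) *
          (Real.exp (-(φ * t)) * h₀ + (n : ℝ) * (1 - Real.exp (-(φ * t)))) ^ p
        ≤ Real.exp (-(ρ * t)) * ((n:ℝ) ^ (1 - σ) * (h₀ + n) ^ p) := h1
      _ = (n:ℝ) ^ (1 - σ) * (h₀ + n) ^ p / (σ - 1) * Real.exp (-(ρ * t)) * (σ - 1) := by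
          field_simp
  rw [integral_const_mul, integral_exp_neg_mul_Ioi_zero hρ] at key
  have hadd : (n:ℝ) ^ (1 - σ) * (n:ℝ) ^ p = (n:ℝ) ^ ((1 - σ) + p) :=
    (Real.rpow_add hn0 _ _).symm
  have h2n : (h₀ + n) ^ p ≤ (2 * n) ^ p := Real.rpow_le_rpow (by linarith) (by linarith) hp.le
  have hsplit : ((2:ℝ) * n) ^ p = 2 ^ p * (n:ℝ) ^ p := Real.mul_rpow (by norm_num) hn0.le
  have hXY : (n:ℝ) ^ (1 - σ) * (h₀ + n) ^ p ≤ 2 ^ p * ((n:ℝ) ^ (1 - σ) * (n:ℝ) ^ p) := by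
    calc (n:ℝ) ^ (1 - σ) * (h₀ + n) ^ p ≤ (n:ℝ) ^ (1 - σ) * ((2:ℝ) * n) ^ p :=
          mul_le_mul_of_nonneg_left h2n (by positivity)
      _ = 2 ^ p * ((n:ℝ) ^ (1 - σ) * (n:ℝ) ^ p) := by rw [hsplit]; ring
  have hfin : A * ρ⁻¹ ≤ 2 ^ p * (n:ℝ) ^ ((1 - σ) + p) / (σ - 1) / ρ := by
    calc A * ρ⁻¹ = ((n:ℝ) ^ (1 - σ) * (h₀ + n) ^ p) / (σ - 1) / ρ := by
          rw [hA_def]; ring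
      _ ≤ (2 ^ p * ((n:ℝ) ^ (1 - σ) * (n:ℝ) ^ p)) / (σ - 1) / ρ := by gcongr
      _ = 2 ^ p * (n:ℝ) ^ ((1 - σ) + p) / (σ - 1) / ρ := by rw [hadd]
  exact key.trans hfin
end

section
/- Restricted to constant controls ℓ(t) ≡ l with l ∈ [ℓ̲, ℓ̄] (where ℓ̄ < +∞), the payoff J(h₀, l) = ∫₀^∞ e^{−ρt} l^{1−σ} (e^{−φt}(h₀ − l) + l)^{γ(σ−1)} / (1−σ) dt is maximized at l = ℓ̄; that is, sup over constant controls equals J(h₀, ℓ̄), and J(h₀, l) ≤ J(h₀, ℓ̄) for every l ∈ [ℓ̲, ℓ̄]. -/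
open MeasureTheory Real Set

lemma integrand_integrable (ρ φ σ γ h₀ l : ℝ) (hρ : 0 < ρ) (hφ : 0 < φ)
    (hσ : 1 < σ) (hk : 0 < γ * (σ - 1)) (hl : 0 < l) (hh₀ : 0 ≤ h₀) :
    IntegrableOn (fun t => Real.exp (-(ρ * t)) * (l ^ (1 - σ)) *
      ((Real.exp (-(φ * t)) * (h₀ - l) + l) ^ (γ * (σ - 1))) / (1 - σ)) (Set.Ioi 0) := by
  set k := γ * (σ - 1) with hkdef
  set M := max h₀ l with hM
  have hMpos : 0 < M := lt_max_of_lt_right hl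
  have hcont : Continuous (fun t => Real.exp (-(ρ * t)) * (l ^ (1 - σ)) *
      ((Real.exp (-(φ * t)) * (h₀ - l) + l) ^ k) / (1 - σ)) := by
    apply Continuous.div_const
    apply Continuous.mul
    · exact (Continuous.mul (by continuity) continuous_const)
    · exact Continuous.rpow_const (by continuity) (fun x => Or.inr hk.le)
  have hexpint : IntegrableOn (fun t => (l ^ (1 - σ) * M ^ k / (σ - 1)) * Real.exp (-(ρ * t)))
      (Set.Ioi 0) := by
    have := exp_neg_integrableOn_Ioi 0 hρ
    simp_rw [neg_mul] at this
    exact this.const_mul _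
  apply hexpint.mono' (hcont.aestronglyMeasurable.restrict)
  filter_upwards [ae_restrict_mem measurableSet_Ioi] with t ht
  have ht0 : (0:ℝ) < t := ht
  have ha : (0:ℝ) < Real.exp (-(φ * t)) := Real.exp_pos _
  have ha1 : Real.exp (-(φ * t)) ≤ 1 := by
    apply Real.exp_le_one_iff.2; nlinarith
  set a := Real.exp (-(φ * t)) with hadef
  have hH0 : 0 ≤ a * (h₀ - l) + l := by nlinarith [mul_nonneg ha.le hh₀]
  have hHM : a * (h₀ - l) + l ≤ M := by
    have h1 : h₀ ≤ M := le_max_left _ _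
    have h2 : l ≤ M := le_max_right _ _
    nlinarith [mul_nonneg ha.le hh₀]
  have hHk : (a * (h₀ - l) + l) ^ k ≤ M ^ k := Real.rpow_le_rpow hH0 hHM hk.le
  have hnn : (0:ℝ) ≤ Real.exp (-(ρ * t)) * l ^ (1 - σ) * (a * (h₀ - l) + l) ^ k := by
    positivity
  rw [norm_div, Real.norm_eq_abs, Real.norm_eq_abs, abs_of_nonneg hnn,
    abs_of_neg (by linarith : (1:ℝ) - σ < 0)]
  have heq : l ^ (1 - σ) * M ^ k / (σ - 1) * Real.exp (-(ρ * t))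
      = Real.exp (-(ρ * t)) * l ^ (1 - σ) * M ^ k / (σ - 1) := by ring
  rw [neg_sub, heq]
  gcongr

lemma pointwise_mono (φ σ γ h₀ l hi t : ℝ) (hφ : 0 < φ) (hσ : 1 < σ)
    (hγ0 : 0 < γ) (hγ1 : γ < 1) (hl : 0 < l) (hlhi : l ≤ hi) (hh₀ : 0 ≤ h₀)
    (ht : 0 < t) :
    hi ^ (1 - σ) * ((Real.exp (-(φ * t)) * (h₀ - hi) + hi) ^ (γ * (σ - 1))) ≤
      l ^ (1 - σ) * ((Real.exp (-(φ * t)) * (h₀ - l) + l) ^ (γ * (σ - 1))) := by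
  set k := γ * (σ - 1) with hkdef
  have hk : 0 < k := by nlinarith
  have hkσ : k ≤ σ - 1 := by nlinarith
  set a := Real.exp (-(φ * t)) with hadef
  have ha : 0 < a := Real.exp_pos _
  have ha1 : a < 1 := by
    rw [hadef, Real.exp_lt_one_iff]; nlinarith
  have hhi : 0 < hi := lt_of_lt_of_le hl hlhi
  have hHl : 0 < a * (h₀ - l) + l := by nlinarith [mul_nonneg ha.le hh₀]
  have hHhi : 0 < a * (h₀ - hi) + hi := by nlinarith [mul_nonneg ha.le hh₀]
  set Hl := a * (h₀ - l) + l with hHldef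
  set Hhi := a * (h₀ - hi) + hi with hHhidef
  have hratio : Hhi / Hl ≤ hi / l := by
    rw [div_le_div_iff₀ hHl hl, hHhidef, hHldef]
    nlinarith [mul_nonneg (mul_nonneg ha.le hh₀) (sub_nonneg.2 hlhi)]
  have hone : (1:ℝ) ≤ hi / l := (one_le_div hl).2 hlhi
  have step1 : (Hhi / Hl) ^ k ≤ (hi / l) ^ k :=
    Real.rpow_le_rpow (by positivity) hratio hk.le
  have step2 : (hi / l) ^ k ≤ (hi / l) ^ (σ - 1) :=
    Real.rpow_le_rpow_of_exponent_le hone hkσ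
  have key : Hhi ^ k / Hl ^ k ≤ hi ^ (σ - 1) / l ^ (σ - 1) := by
    rw [← Real.div_rpow hHhi.le hHl.le, ← Real.div_rpow hhi.le hl.le]
    exact step1.trans step2
  have hcross : Hhi ^ k * l ^ (σ - 1) ≤ hi ^ (σ - 1) * Hl ^ k := by
    rw [div_le_div_iff₀ (by positivity) (by positivity)] at key
    linarith
  have hl1σ : l ^ (1 - σ) = (l ^ (σ - 1))⁻¹ := by
    rw [← Real.rpow_neg hl.le]; ring_nf
  have hhi1σ : hi ^ (1 - σ) = (hi ^ (σ - 1))⁻¹ := by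
    rw [← Real.rpow_neg hhi.le]; ring_nf
  rw [hl1σ, hhi1σ, inv_mul_eq_div, inv_mul_eq_div,
    div_le_div_iff₀ (by positivity) (by positivity)]
  linarith

/-- Payoff of the constant control `ℓ(t) ≡ l`, whose trajectory is
`h(t) = e^{−φt}(h₀ − l) + l`. -/
noncomputable def Jconst (ρ φ σ γ h₀ l : ℝ) : ℝ :=
  ∫ t in Set.Ioi (0:ℝ),
    Real.exp (-(ρ * t)) * (l ^ (1 - σ)) *
      ((Real.exp (-(φ * t)) * (h₀ - l) + l) ^ (γ * (σ - 1))) / (1 - σ)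

/-- among constant controls `l ∈ [ℓ̲, ℓ̄]` (with `ℓ̄ < +∞`), the payoff is
maximized at `l = ℓ̄`: every constant control does no better than `ℓ̄`, and the supremum
over constant controls equals `J(h₀, ℓ̄)`. -/
theorem Jconst_max_at_top (ρ φ σ γ lo hi h₀ : ℝ)
    (hρ : 0 < ρ) (hφ : 0 < φ) (hσ : 1 < σ) (hγ0 : 0 < γ) (hγ1 : γ < 1)
    (hγσ : 1 < γ * (σ - 1)) (hlo : 0 < lo) (hlohi : lo ≤ hi) (hh₀ : 0 ≤ h₀) :
    (∀ l ∈ Set.Icc lo hi, Jconst ρ φ σ γ h₀ l ≤ Jconst ρ φ σ γ h₀ hi) ∧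
      sSup ((fun l => Jconst ρ φ σ γ h₀ l) '' Set.Icc lo hi) = Jconst ρ φ σ γ h₀ hi := by
  have hk : 0 < γ * (σ - 1) := by linarith
  have hhi : 0 < hi := lt_of_lt_of_le hlo hlohi
  have hmono : ∀ l ∈ Set.Icc lo hi, Jconst ρ φ σ γ h₀ l ≤ Jconst ρ φ σ γ h₀ hi := by
    intro l hlmem
    obtain ⟨hl1, hl2⟩ := hlmem
    have hl : 0 < l := lt_of_lt_of_le hlo hl1
    apply setIntegral_mono_on
      (integrand_integrable ρ φ σ γ h₀ l hρ hφ hσ hk hl hh₀)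
      (integrand_integrable ρ φ σ γ h₀ hi hρ hφ hσ hk hhi hh₀)
      measurableSet_Ioi
    intro t ht
    have hpt := pointwise_mono φ σ γ h₀ l hi t hφ hσ hγ0 hγ1 hl hl2 hh₀ ht
    rw [div_le_div_right_of_neg (by linarith : (1:ℝ) - σ < 0)]
    have hexp : 0 ≤ Real.exp (-(ρ * t)) := (Real.exp_pos _).le
    calc Real.exp (-(ρ * t)) * hi ^ (1 - σ) *
          ((Real.exp (-(φ * t)) * (h₀ - hi) + hi) ^ (γ * (σ - 1)))
        = Real.exp (-(ρ * t)) * (hi ^ (1 - σ) *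
          ((Real.exp (-(φ * t)) * (h₀ - hi) + hi) ^ (γ * (σ - 1)))) := by ring
      _ ≤ Real.exp (-(ρ * t)) * (l ^ (1 - σ) *
          ((Real.exp (-(φ * t)) * (h₀ - l) + l) ^ (γ * (σ - 1)))) :=
          mul_le_mul_of_nonneg_left hpt hexp
      _ = Real.exp (-(ρ * t)) * l ^ (1 - σ) *
          ((Real.exp (-(φ * t)) * (h₀ - l) + l) ^ (γ * (σ - 1))) := by ring
  refine ⟨hmono, ?_⟩
  apply IsGreatest.csSup_eq
  constructor
  · exact ⟨hi, ⟨hlohi, le_refl hi⟩, rfl⟩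
  · rintro x ⟨l, hlmem, rfl⟩
    exact hmono l hlmem
end

section
/- For bounded controls (ℓ̄ < +∞), the simplified value function satisfies the upper bound W(h₀) ≤ (ℓ̄^{1−σ}/(1−σ)) · h₀^{γ(σ−1)} / (ρ + φγ(σ−1)) for every h₀ > 0; in particular W(h₀) ≤ c₁ h₀^{γ(σ−1)}/(1−σ) with the positive constant c₁ = ℓ̄^{1−σ}/(ρ + φγ(σ−1)). (This follows from the pointwise trajectory bound h^{h₀,ℓ}(t) ≥ e^{−φt} h₀ valid for every admissible control.) -/
open MeasureTheory Real Set Filter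

lemma intExpIoi {b : ℝ} (hb : 0 < b) :
    ∫ x in Set.Ioi (0:ℝ), Real.exp (-(b*x)) = 1/b := by
  have h := MeasureTheory.integral_comp_mul_left_Ioi (fun x => Real.exp (-x)) 0 hb
  simp only [mul_zero] at h
  rw [h, integral_exp_neg_Ioi_zero, smul_eq_mul, mul_one, one_div]

lemma intervalExp {φ : ℝ} (t : ℝ) (hφ : 0 < φ) :
    ∫ s in (0:ℝ)..t, Real.exp (φ * s) = (Real.exp (φ*t) - 1)/φ := by
  have h := intervalIntegral.mul_integral_comp_mul_left (a := 0) (b := t) (c := φ) (f := Real.exp)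
  rw [mul_zero] at h
  rw [eq_div_iff hφ.ne', mul_comm, h, integral_exp, Real.exp_zero]

lemma payoff_le (ρ φ σ γ lo hi : ℝ)
    (hρ : 0 < ρ) (hφ : 0 < φ) (hσ : 1 < σ)
    (hγσ : 1 < γ * (σ - 1)) (hlo : 0 < lo) (hlohi : lo ≤ hi)
    (h₀ : ℝ) (hh₀ : 0 < h₀) (ℓ : ℝ → ℝ) (hm : Measurable ℓ)
    (hbd : ∀ t, 0 ≤ t → lo ≤ ℓ t ∧ ℓ t ≤ hi) :
    payoff ρ φ σ γ h₀ ℓ ≤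
      (hi ^ (1 - σ) / (1 - σ)) * h₀ ^ (γ * (σ - 1)) / (ρ + φ * γ * (σ - 1)) := by
  have hp1 : 1 < γ * (σ - 1) := hγσ
  set p := γ * (σ - 1) with hpdef
  have hp0 : (0:ℝ) < p := lt_trans one_pos hp1
  have h1σ : 1 - σ < 0 := by linarith
  have hhi : 0 < hi := lt_of_lt_of_le hlo hlohi
  have hrate : 0 < ρ + φ * p := by positivity
  -- interval integrability of the trajectory integrand
  have hint1 : ∀ t : ℝ, 0 < t →
      IntervalIntegrable (fun s => Real.exp (-(φ*(t-s))) * ℓ s) volume 0 t := by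
    intro t ht
    rw [intervalIntegrable_iff]
    refine ⟨((Real.measurable_exp.comp
        (((measurable_const.sub measurable_id).const_mul φ).neg)).mul hm).aestronglyMeasurable, ?_⟩
    apply HasFiniteIntegral.restrict_of_bounded (C := hi)
    · rw [Set.uIoc_of_le ht.le]; exact measure_Ioc_lt_top
    · refine (ae_restrict_iff' measurableSet_uIoc).2 (ae_of_all _ ?_)
      intro s hs
      rw [Set.uIoc_of_le ht.le] at hs
      have h0s : 0 ≤ s := hs.1.le
      have hb := hbd s h0s
      have hℓpos : 0 < ℓ s := lt_of_lt_of_le hlo hb.1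
      rw [Real.norm_eq_abs, abs_mul, abs_of_pos (Real.exp_pos _), abs_of_pos hℓpos]
      have he : Real.exp (-(φ*(t-s))) ≤ 1 := by
        rw [show (1:ℝ) = Real.exp 0 by simp]
        exact Real.exp_le_exp.mpr (by nlinarith [hs.2])
      nlinarith [Real.exp_pos (-(φ*(t-s))), hb.2]
  -- trajectory lower bound
  have htraj_low : ∀ t : ℝ, 0 < t → Real.exp (-(φ*t)) * h₀ ≤ traj φ h₀ ℓ t := by
    intro t ht
    have h0 : 0 ≤ ∫ s in (0:ℝ)..t, Real.exp (-(φ*(t-s))) * ℓ s :=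
      intervalIntegral.integral_nonneg ht.le (fun s hs =>
        mul_nonneg (Real.exp_pos _).le (le_trans hlo.le (hbd s hs.1).1))
    have := mul_nonneg hφ.le h0
    unfold traj; linarith
  have htraj_pos : ∀ t : ℝ, 0 < t → 0 < traj φ h₀ ℓ t := fun t ht =>
    lt_of_lt_of_le (mul_pos (Real.exp_pos _) hh₀) (htraj_low t ht)
  -- key exponential integral
  have hkey : ∀ t : ℝ, 0 < t →
      ∫ s in (0:ℝ)..t, Real.exp (-(φ*(t-s))) * hi = hi * (1 - Real.exp (-(φ*t))) / φ := by
    intro t ht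
    have e0 : (fun s => Real.exp (-(φ*(t-s))) * hi)
        = fun s => (Real.exp (-(φ*t)) * hi) * Real.exp (φ*s) := by
      funext s
      rw [mul_comm (Real.exp (-(φ*t)) * hi), ← mul_assoc, mul_comm (Real.exp (φ*s)),
        ← Real.exp_add, show -(φ*t) + φ*s = -(φ*(t-s)) by ring]
    rw [e0, intervalIntegral.integral_const_mul, intervalExp t hφ]
    have e1 : Real.exp (-(φ*t)) * Real.exp (φ*t) = 1 := by
      rw [← Real.exp_add]; simp
    field_simp
    nlinarith [e1]
  -- trajectory upper bound
  have htraj_up : ∀ t : ℝ, 0 < t → traj φ h₀ ℓ t ≤ h₀ + hi := by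
    intro t ht
    have hint2 : IntervalIntegrable (fun s => Real.exp (-(φ*(t-s))) * hi) volume 0 t := by
      apply Continuous.intervalIntegrable
      exact (Real.continuous_exp.comp ((continuous_const.mul (continuous_const.sub continuous_id)).neg)).mul
        continuous_const
    have hmono : (∫ s in (0:ℝ)..t, Real.exp (-(φ*(t-s))) * ℓ s)
        ≤ ∫ s in (0:ℝ)..t, Real.exp (-(φ*(t-s))) * hi :=
      intervalIntegral.integral_mono_on ht.le (hint1 t ht) hint2 (fun s hs =>
        mul_le_mul_of_nonneg_left (hbd s hs.1).2 (Real.exp_pos _).le)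
    rw [hkey t ht] at hmono
    have he1 : Real.exp (-(φ*t)) ≤ 1 := by
      rw [show (1:ℝ) = Real.exp 0 by simp]
      exact Real.exp_le_exp.mpr (by nlinarith)
    have he2 : 0 < Real.exp (-(φ*t)) := Real.exp_pos _
    have h3 : φ * (hi * (1 - Real.exp (-(φ*t))) / φ) = hi * (1 - Real.exp (-(φ*t))) := by
      field_simp
    have h4 : φ * (∫ s in (0:ℝ)..t, Real.exp (-(φ*(t-s))) * ℓ s)
        ≤ hi * (1 - Real.exp (-(φ*t))) := by
      rw [← h3]; exact mul_le_mul_of_nonneg_left hmono hφ.le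
    unfold traj
    nlinarith [Real.exp_pos (-(φ*t))]
  -- modified control, continuous primitive
  set ℓ' : ℝ → ℝ := fun s => if 0 ≤ s then ℓ s else lo with hℓ'def
  have hℓ'm : Measurable ℓ' := Measurable.ite measurableSet_Ici hm measurable_const
  have hℓ'bd : ∀ s : ℝ, lo ≤ ℓ' s ∧ ℓ' s ≤ hi := by
    intro s
    by_cases h : 0 ≤ s
    · simp only [hℓ'def, if_pos h]; exact hbd s h
    · simp only [hℓ'def, if_neg h]; exact ⟨le_rfl, hlohi⟩
  have hℓ'eq : ∀ s : ℝ, 0 ≤ s → ℓ' s = ℓ s := fun s h => if_pos h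
  have hKint : ∀ a b : ℝ, IntervalIntegrable (fun s => Real.exp (φ*s) * ℓ' s) volume a b := by
    intro a b
    rw [intervalIntegrable_iff]
    refine ⟨((Real.measurable_exp.comp (measurable_id.const_mul φ)).mul
      hℓ'm).aestronglyMeasurable, ?_⟩
    apply HasFiniteIntegral.restrict_of_bounded (C := Real.exp (|φ| * (|a| ⊔ |b|)) * hi)
    · rw [Set.uIoc]; exact measure_Ioc_lt_top
    · refine (ae_restrict_iff' measurableSet_uIoc).2 (ae_of_all _ ?_)
      intro s hs
      rw [Set.uIoc] at hs
      have hs1 : s ≤ |a| ⊔ |b| :=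
        le_trans hs.2 (sup_le_sup (le_abs_self a) (le_abs_self b))
      have hs2 : -(|a| ⊔ |b|) ≤ s := by
        refine le_trans (le_inf ?_ ?_) hs.1.le
        · exact le_trans (neg_le_neg le_sup_left) (neg_abs_le a)
        · exact le_trans (neg_le_neg le_sup_right) (neg_abs_le b)
      have habs : |s| ≤ |a| ⊔ |b| := abs_le.mpr ⟨hs2, hs1⟩
      have hb := hℓ'bd s
      have hℓ'pos : 0 < ℓ' s := lt_of_lt_of_le hlo hb.1
      rw [Real.norm_eq_abs, abs_mul, abs_of_pos (Real.exp_pos _), abs_of_pos hℓ'pos]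
      have he : Real.exp (φ*s) ≤ Real.exp (|φ| * (|a| ⊔ |b|)) := by
        apply Real.exp_le_exp.mpr
        calc φ * s ≤ |φ * s| := le_abs_self _
          _ = |φ| * |s| := abs_mul _ _
          _ ≤ |φ| * (|a| ⊔ |b|) := mul_le_mul_of_nonneg_left habs (abs_nonneg φ)
      exact mul_le_mul he hb.2 hℓ'pos.le (Real.exp_pos _).le
  set K : ℝ → ℝ := fun t => ∫ s in (0:ℝ)..t, Real.exp (φ*s) * ℓ' s with hKdef
  have hKcont : Continuous K := intervalIntegral.continuous_primitive hKint 0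
  -- trajectory representation on Ioi 0
  have htraj_eq : ∀ t : ℝ, 0 < t →
      traj φ h₀ ℓ t = Real.exp (-(φ*t)) * h₀ + φ * (Real.exp (-(φ*t)) * K t) := by
    intro t ht
    have e1 : (fun s => Real.exp (-(φ*(t-s))) * ℓ s)
        = fun s => Real.exp (-(φ*t)) * (Real.exp (φ*s) * ℓ s) := by
      funext s
      rw [← mul_assoc, ← Real.exp_add, show -(φ*t) + φ*s = -(φ*(t-s)) by ring]
    have e2 : (∫ s in (0:ℝ)..t, Real.exp (φ*s) * ℓ s) = K t := by
      rw [hKdef]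
      refine intervalIntegral.integral_congr (fun s hs => ?_)
      rw [Set.uIcc_of_le ht.le] at hs
      rw [hℓ'eq s hs.1]
    unfold traj
    rw [e1, intervalIntegral.integral_const_mul, e2]
  -- measurable version of the integrand
  set F : ℝ → ℝ := fun t => Real.exp (-(ρ*t)) * (ℓ' t ^ (1-σ)) *
      ((Real.exp (-(φ*t)) * h₀ + φ * (Real.exp (-(φ*t)) * K t)) ^ p) / (1-σ) with hFdef
  have hFm : Measurable F := by
    apply Measurable.div_const
    apply Measurable.mul
    · exact (Real.measurable_exp.comp (measurable_id.const_mul ρ).neg).mul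
        (hℓ'm.pow_const _)
    · apply Measurable.pow_const
      exact ((Real.measurable_exp.comp (measurable_id.const_mul φ).neg).mul
        measurable_const).add
        (((Real.measurable_exp.comp (measurable_id.const_mul φ).neg).mul
          hKcont.measurable).const_mul φ)
  have hFeq : ∀ t : ℝ, 0 < t → F t
      = Real.exp (-(ρ*t)) * (ℓ t ^ (1-σ)) * (traj φ h₀ ℓ t ^ p) / (1-σ) := by
    intro t ht
    rw [hFdef]
    simp only
    rw [htraj_eq t ht, hℓ'eq t ht.le]
  -- integrability of the integrand
  have hC0 : 0 ≤ lo ^ (1-σ) * (h₀ + hi) ^ p / (σ - 1) :=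
    div_nonneg (mul_nonneg (Real.rpow_nonneg hlo.le _)
      (Real.rpow_nonneg (by positivity) _)) (by linarith)
  have hbound : ∀ t : ℝ, 0 < t →
      ‖Real.exp (-(ρ*t)) * (ℓ t ^ (1-σ)) * (traj φ h₀ ℓ t ^ p) / (1-σ)‖
        ≤ (lo ^ (1-σ) * (h₀ + hi) ^ p / (σ - 1)) * Real.exp (-(ρ*t)) := by
    intro t ht
    have hb := hbd t ht.le
    have hℓpos : 0 < ℓ t := lt_of_lt_of_le hlo hb.1
    have hA0 : 0 ≤ Real.exp (-(ρ*t)) * (ℓ t ^ (1-σ)) * (traj φ h₀ ℓ t ^ p) :=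
      mul_nonneg (mul_nonneg (Real.exp_pos _).le (Real.rpow_nonneg hℓpos.le _))
        (Real.rpow_nonneg (htraj_pos t ht).le _)
    rw [Real.norm_eq_abs, abs_div, abs_of_nonneg hA0, abs_of_neg h1σ, neg_sub]
    rw [div_le_iff₀ (by linarith : (0:ℝ) < σ - 1)]
    have hAle : Real.exp (-(ρ*t)) * (ℓ t ^ (1-σ)) * (traj φ h₀ ℓ t ^ p)
        ≤ Real.exp (-(ρ*t)) * (lo ^ (1-σ)) * ((h₀ + hi) ^ p) := by
      refine mul_le_mul (mul_le_mul le_rfl ?_ (Real.rpow_nonneg hℓpos.le _)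
        (Real.exp_pos _).le) ?_ (Real.rpow_nonneg (htraj_pos t ht).le _)
        (by positivity)
      · exact Real.rpow_le_rpow_of_nonpos hlo hb.1 h1σ.le
      · exact Real.rpow_le_rpow (htraj_pos t ht).le (htraj_up t ht) hp0.le
    have hfin : lo ^ (1-σ) * (h₀ + hi) ^ p / (σ - 1) * Real.exp (-(ρ*t)) * (σ - 1)
        = Real.exp (-(ρ*t)) * (lo ^ (1-σ)) * ((h₀ + hi) ^ p) := by
      rw [div_mul_eq_mul_div, div_mul_cancel₀ _ (by linarith : σ - 1 ≠ (0:ℝ))]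
      ring
    rw [hfin]
    exact hAle
  have henv : IntegrableOn
      (fun t => (lo ^ (1-σ) * (h₀ + hi) ^ p / (σ - 1)) * Real.exp (-(ρ*t))) (Ioi (0:ℝ)) := by
    have := (exp_neg_integrableOn_Ioi 0 hρ)
    simp only [neg_mul] at this
    exact this.const_mul _
  have hfint : IntegrableOn
      (fun t => Real.exp (-(ρ*t)) * (ℓ t ^ (1-σ)) * (traj φ h₀ ℓ t ^ p) / (1-σ))
      (Ioi (0:ℝ)) := by
    refine Integrable.mono' henv ?_ ?_
    · refine hFm.aestronglyMeasurable.congr ?_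
      refine (ae_restrict_iff' measurableSet_Ioi).2 (ae_of_all _ fun t ht => ?_)
      exact hFeq t ht
    · exact (ae_restrict_iff' measurableSet_Ioi).2 (ae_of_all _ fun t ht => hbound t ht)
  -- the comparison function
  set G : ℝ → ℝ := fun t => (hi ^ (1-σ) * h₀ ^ p / (1-σ)) * Real.exp (-((ρ + φ*p) * t))
    with hGdef
  have hGint : IntegrableOn G (Ioi (0:ℝ)) := by
    have := (exp_neg_integrableOn_Ioi 0 hrate)
    simp only [neg_mul] at this
    exact this.const_mul _
  have hGt : ∀ t : ℝ, G t = Real.exp (-(ρ*t)) * (hi ^ (1-σ))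
      * ((Real.exp (-(φ*t)) * h₀) ^ p) / (1-σ) := by
    intro t
    rw [hGdef]
    simp only
    rw [Real.mul_rpow (Real.exp_pos _).le hh₀.le, ← Real.exp_mul,
      show -((ρ + φ*p) * t) = -(ρ*t) + -(φ*t)*p by ring, Real.exp_add]
    ring
  have hfg : ∀ t ∈ Ioi (0:ℝ),
      Real.exp (-(ρ*t)) * (ℓ t ^ (1-σ)) * (traj φ h₀ ℓ t ^ p) / (1-σ) ≤ G t := by
    intro t ht
    rw [mem_Ioi] at ht
    have hb := hbd t ht.le
    have hℓpos : 0 < ℓ t := lt_of_lt_of_le hlo hb.1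
    rw [hGt t, div_eq_mul_inv, div_eq_mul_inv]
    refine mul_le_mul_of_nonpos_right ?_ (inv_nonpos.mpr h1σ.le)
    refine mul_le_mul (mul_le_mul le_rfl ?_ (Real.rpow_nonneg hhi.le _)
      (Real.exp_pos _).le) ?_ (Real.rpow_nonneg (by positivity) _)
      (by positivity)
    · exact Real.rpow_le_rpow_of_nonpos hℓpos hb.2 h1σ.le
    · exact Real.rpow_le_rpow (by positivity) (htraj_low t ht) hp0.le
  have hGval : ∫ t in Ioi (0:ℝ), G t
      = (hi ^ (1 - σ) / (1 - σ)) * h₀ ^ p / (ρ + φ * γ * (σ - 1)) := by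
    rw [hGdef]
    simp only
    rw [MeasureTheory.integral_const_mul, intExpIoi hrate, hpdef]
    ring
  calc payoff ρ φ σ γ h₀ ℓ
      ≤ ∫ t in Ioi (0:ℝ), G t :=
        MeasureTheory.setIntegral_mono_on hfint hGint measurableSet_Ioi hfg
    _ = (hi ^ (1 - σ) / (1 - σ)) * h₀ ^ p / (ρ + φ * γ * (σ - 1)) := hGval

/-- for bounded controls, the simplified value function satisfies the
upper bound `W(h₀) ≤ (ℓ̄^{1−σ}/(1−σ)) · h₀^{γ(σ−1)} / (ρ + φγ(σ−1))` for `h₀ > 0`. -/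
theorem W_upper_bound (ρ φ σ γ lo hi : ℝ)
    (hρ : 0 < ρ) (hφ : 0 < φ) (hσ : 1 < σ) (hγ0 : 0 < γ) (hγ1 : γ < 1)
    (hγσ : 1 < γ * (σ - 1)) (hlo : 0 < lo) (hlohi : lo ≤ hi)
    (h₀ : ℝ) (hh₀ : 0 < h₀) :
    W ρ φ σ γ lo (hi : EReal) h₀ ≤
      (hi ^ (1 - σ) / (1 - σ)) * h₀ ^ (γ * (σ - 1)) / (ρ + φ * γ * (σ - 1)) := by
  unfold W
  apply csSup_le
  · exact ⟨payoff ρ φ σ γ h₀ (fun _ => lo), fun _ => lo,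
      ⟨measurable_const, fun t _ => ⟨le_rfl, EReal.coe_le_coe_iff.mpr hlohi⟩⟩, rfl⟩
  · rintro x ⟨ℓ, ⟨hmeas, hb⟩, rfl⟩
    exact payoff_le ρ φ σ γ lo hi hρ hφ hσ hγσ hlo hlohi h₀ hh₀ ℓ hmeas
      (fun t ht => ⟨(hb t ht).1, EReal.coe_le_coe_iff.mp (hb t ht).2⟩)
end
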